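/- Let (A, B) be a pair of matrices in GL₃(ℂ) with A² = I and (AB)³ = I, such that B is diagonalizable, the pair is indecomposable, and there is a two-dimensional subspace W ⊆ ℂ³ invariant under both A and B which is the direct sum of two one-dimensional subspaces each invariant under both A and B. Then (A, B) is simultaneously conjugate to exactly one of the six pairs (A_x, B_x) indexed by x = (x₁, x₂, x₃) ∈ {(1,5,0), (2,0,1), (3,1,2), (4,2,3), (5,3,4), (0,4,5)}, where B_x = diag(e(x₁/6), e(x₂/6), e(x₃/6)), σ = (−1)^{x₃}, and A_x = [[−σ, 0, 1],[0, −σ, 1],[0, 0, σ]]. -/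

import Mathlib

noncomputable section
open Matrix

/-- `e(r) = exp(2πir)`. -/
def ee (r : ℝ) : ℂ := Complex.exp (2 * Real.pi * Complex.I * r)

/-- A subspace `W` is invariant under the matrix `M` (acting by `mulVec`). -/
def Invariant {n : ℕ} (M : Matrix (Fin n) (Fin n) ℂ) (W : Submodule ℂ (Fin n → ℂ)) : Prop :=
  ∀ v ∈ W, M.mulVec v ∈ W

/-- The pair `(A, B)` is decomposable: `ℂⁿ` is the direct sum of two nonzero subspaces,
each invariant under both `A` and `B`. -/
def Decomposable {n : ℕ} (A B : Matrix (Fin n) (Fin n) ℂ) : Prop :=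
  ∃ U V : Submodule ℂ (Fin n → ℂ), U ≠ ⊥ ∧ V ≠ ⊥ ∧ IsCompl U V ∧
    Invariant A U ∧ Invariant B U ∧ Invariant A V ∧ Invariant B V

/-- The pair `(A, B)` is indecomposable. -/
def Indecomposable {n : ℕ} (A B : Matrix (Fin n) (Fin n) ℂ) : Prop :=
  ¬ Decomposable A B

/-- `(A, B)` and `(A', B')` are simultaneously conjugate:
`P A P⁻¹ = A'` and `P B P⁻¹ = B'` for a single invertible `P`. -/
def SimConj {n : ℕ} (A B A' B' : Matrix (Fin n) (Fin n) ℂ) : Prop :=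
  ∃ P : Matrix (Fin n) (Fin n) ℂ, IsUnit P ∧ P * A = A' * P ∧ P * B = B' * P

/-- `M` is diagonalizable over `ℂ`. -/
def IsDiagonalizable {n : ℕ} (M : Matrix (Fin n) (Fin n) ℂ) : Prop :=
  ∃ P : Matrix (Fin n) (Fin n) ℂ, IsUnit P ∧ ∃ d : Fin n → ℂ, P * M = Matrix.diagonal d * P

/-- The six triples of Table 1. -/
def t8 : Fin 6 → Fin 3 → ℕ :=
  ![![1, 5, 0], ![2, 0, 1], ![3, 1, 2], ![4, 2, 3], ![5, 3, 4], ![0, 4, 5]]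

/-- `B_x = diag(e(x₁/6), e(x₂/6), e(x₃/6))`. -/
def B8 (i : Fin 6) : Matrix (Fin 3) (Fin 3) ℂ :=
  Matrix.diagonal fun j => ee ((t8 i j : ℝ) / 6)

/-- `σ = (−1)^{x₃}`. -/
def σ8 (i : Fin 6) : ℂ := (-1) ^ (t8 i 2)

/-- `A_x = [[−σ,0,1],[0,−σ,1],[0,0,σ]]`. -/
def A8 (i : Fin 6) : Matrix (Fin 3) (Fin 3) ℂ :=
  !![-σ8 i, 0, 1; 0, -σ8 i, 1; 0, 0, σ8 i]


def ζ6 : ℂ := Complex.exp (2 * Real.pi * Complex.I / 6)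

lemma ee_nat (k : ℕ) : ee ((k:ℝ)/6) = ζ6 ^ k := by
  rw [ζ6, ← Complex.exp_nat_mul, ee]
  congr 1
  push_cast
  ring

lemma zeta_pow_eq_iff (a b : ℕ) : ζ6 ^ a = ζ6 ^ b ↔ (6:ℤ) ∣ ((a:ℤ) - b) := by
  rw [ζ6, ← Complex.exp_nat_mul, ← Complex.exp_nat_mul, Complex.exp_eq_exp_iff_exists_int]
  constructor
  · rintro ⟨n, hn⟩
    refine ⟨n, ?_⟩
    have h2 : ((a:ℂ) - b - 6*n) * (2 * Real.pi * Complex.I / 6) = 0 := by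
      rw [sub_mul, sub_mul, hn]; ring
    have hne : (2 * (Real.pi:ℂ) * Complex.I / 6) ≠ 0 := by
      simp [Real.pi_ne_zero, Complex.I_ne_zero, Complex.ofReal_ne_zero]
    have h3 := (mul_eq_zero.1 h2).resolve_right hne
    have h4 : ((a:ℤ) : ℂ) = ((b + 6*n : ℤ) : ℂ) := by push_cast; linear_combination h3
    have h5 : (a:ℤ) = b + 6*n := Int.cast_injective h4
    omega
  · rintro ⟨n, hn⟩
    refine ⟨n, ?_⟩
    have : (a:ℂ) = (b:ℂ) + 6*n := by
      have : (a:ℤ) = b + 6*n := by omega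
      exact_mod_cast congrArg (Int.cast : ℤ → ℂ) this
    rw [this]; ring

lemma zeta_pow_ne {a b : ℕ} (h : ¬ (6:ℤ) ∣ ((a:ℤ) - b)) : ζ6 ^ a ≠ ζ6 ^ b :=
  fun hc => h ((zeta_pow_eq_iff a b).1 hc)

lemma zeta_six : ζ6 ^ 6 = 1 := by
  have := (zeta_pow_eq_iff 6 0).2 ⟨1, by norm_num⟩
  simpa using this

lemma zeta_cube : ζ6 ^ 3 = -1 := by
  rw [ζ6, ← Complex.exp_nat_mul]
  rw [show ((3:ℕ):ℂ) * (2 * Real.pi * Complex.I / 6) = Real.pi * Complex.I by push_cast; ring]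
  exact Complex.exp_pi_mul_I

lemma zeta_ne_neg_one : ζ6 ≠ -1 := by
  intro h
  have : ζ6 ^ 1 = ζ6 ^ 3 := by rw [pow_one, zeta_cube, h]
  exact zeta_pow_ne (a := 1) (b := 3) (by decide) this

lemma zeta_quad : ζ6 ^ 2 - ζ6 + 1 = 0 := by
  have h : (ζ6 + 1) * (ζ6 ^ 2 - ζ6 + 1) = 0 := by linear_combination zeta_cube
  rcases mul_eq_zero.1 h with h1 | h2
  · exact absurd (by linear_combination h1 : ζ6 = -1) zeta_ne_neg_one
  · exact h2

lemma zeta_pow4 : ζ6 ^ 4 = -ζ6 := by linear_combination ζ6 * zeta_cube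

lemma cube_roots {l : ℂ} (h : l ^ 3 = 1) : l = 1 ∨ l = ζ6 ^ 2 ∨ l = ζ6 ^ 4 := by
  have key : (l - 1) * ((l - ζ6 ^ 2) * (l + ζ6)) = 0 := by
    linear_combination h - (l - 1) * l * zeta_quad - (l - 1) * (zeta_cube)
  rcases mul_eq_zero.1 key with h1 | h2
  · exact Or.inl (by linear_combination h1)
  · rcases mul_eq_zero.1 h2 with h3 | h4
    · exact Or.inr (Or.inl (by linear_combination h3))
    · exact Or.inr (Or.inr (by rw [zeta_pow4]; linear_combination h4))

lemma square_roots {e : ℂ} (h : e ^ 2 = 1) : e = 1 ∨ e = -1 := by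
  have key : (e - 1) * (e + 1) = 0 := by linear_combination h
  rcases mul_eq_zero.1 key with h1 | h2
  · exact Or.inl (by linear_combination h1)
  · exact Or.inr (by linear_combination h2)

section transfer
variable {n : ℕ} {A B A' B' A'' B'' P : Matrix (Fin n) (Fin n) ℂ}

lemma mul_inv_of_isUnit (hP : IsUnit P) : P * P⁻¹ = 1 :=
  Matrix.mul_nonsing_inv _ ((Matrix.isUnit_iff_isUnit_det _).1 hP)

lemma inv_mul_of_isUnit (hP : IsUnit P) : P⁻¹ * P = 1 :=
  Matrix.nonsing_inv_mul _ ((Matrix.isUnit_iff_isUnit_det _).1 hP)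

lemma simConj_trans (h1 : SimConj A B A' B') (h2 : SimConj A' B' A'' B'') :
    SimConj A B A'' B'' := by
  obtain ⟨P, hP, hPA, hPB⟩ := h1
  obtain ⟨Q, hQ, hQA, hQB⟩ := h2
  exact ⟨Q * P, hQ.mul hP, by rw [mul_assoc, hPA, ← mul_assoc, hQA, mul_assoc],
    by rw [mul_assoc, hPB, ← mul_assoc, hQB, mul_assoc]⟩

lemma conj_pow_rel (hP : IsUnit P) (h : P * A = A' * P) (k : ℕ) (hA : A ^ k = 1) :
    A' ^ k = 1 := by
  have key : ∀ m : ℕ, A' ^ m * P = P * A ^ m := by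
    intro m
    induction m with
    | zero => simp
    | succ m ih => rw [pow_succ, pow_succ, mul_assoc, ← h, ← mul_assoc, ih, mul_assoc]
  have h1 : A' ^ k * P = P := by rw [key, hA, mul_one]
  calc A' ^ k = A' ^ k * P * P⁻¹ := by rw [mul_assoc, mul_inv_of_isUnit hP, mul_one]
  _ = 1 := by rw [h1, mul_inv_of_isUnit hP]

lemma conj_mul_rel (hA : P * A = A' * P) (hB : P * B = B' * P) :
    P * (A * B) = (A' * B') * P := by
  rw [← mul_assoc, hA, mul_assoc, hB, ← mul_assoc]

lemma decomposable_of_simConj (h : SimConj A B A' B') (hd : Decomposable A' B') :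
    Decomposable A B := by
  obtain ⟨P, hP, hPA, hPB⟩ := h
  obtain ⟨U, V, hU, hV, hcompl, hAU, hBU, hAV, hBV⟩ := hd
  have hPinv : ∀ x : Fin n → ℂ, P⁻¹ *ᵥ (P *ᵥ x) = x := by
    intro x; rw [Matrix.mulVec_mulVec, inv_mul_of_isUnit hP, Matrix.one_mulVec]
  have hPinv' : ∀ x : Fin n → ℂ, P *ᵥ (P⁻¹ *ᵥ x) = x := by
    intro x; rw [Matrix.mulVec_mulVec, mul_inv_of_isUnit hP, Matrix.one_mulVec]
  let f : (Fin n → ℂ) →ₗ[ℂ] (Fin n → ℂ) := Matrix.mulVecLin P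
  have hfapp : ∀ x, f x = P *ᵥ x := fun x => rfl
  have hinv : ∀ (M M' : Matrix (Fin n) (Fin n) ℂ), P * M = M' * P → ∀ W : Submodule ℂ (Fin n → ℂ),
      Invariant M' W → Invariant M (W.comap f) := by
    intro M M' hM W hW v hv
    simp only [Submodule.mem_comap, hfapp] at hv ⊢
    rw [Matrix.mulVec_mulVec, hM, ← Matrix.mulVec_mulVec]
    exact hW _ hv
  refine ⟨U.comap f, V.comap f, ?_, ?_, ?_, hinv A A' hPA U hAU, hinv B B' hPB U hBU,
    hinv A A' hPA V hAV, hinv B B' hPB V hBV⟩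
  · obtain ⟨u, hu, hune⟩ := Submodule.exists_mem_ne_zero_of_ne_bot hU
    refine Submodule.ne_bot_iff _ |>.2 ⟨P⁻¹ *ᵥ u, ?_, ?_⟩
    · simp only [Submodule.mem_comap, hfapp, hPinv']; exact hu
    · intro hc; apply hune; rw [← hPinv' u, hc, Matrix.mulVec_zero]
  · obtain ⟨v, hv, hvne⟩ := Submodule.exists_mem_ne_zero_of_ne_bot hV
    refine Submodule.ne_bot_iff _ |>.2 ⟨P⁻¹ *ᵥ v, ?_, ?_⟩
    · simp only [Submodule.mem_comap, hfapp, hPinv']; exact hv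
    · intro hc; apply hvne; rw [← hPinv' v, hc, Matrix.mulVec_zero]
  · constructor
    · rw [disjoint_iff, eq_bot_iff]
      intro x hx
      obtain ⟨hx1, hx2⟩ := Submodule.mem_inf.1 hx
      simp only [Submodule.mem_comap, hfapp] at hx1 hx2
      have : P *ᵥ x ∈ U ⊓ V := Submodule.mem_inf.2 ⟨hx1, hx2⟩
      rw [(disjoint_iff.1 hcompl.disjoint)] at this
      have hPx : P *ᵥ x = 0 := this
      have : x = 0 := by rw [← hPinv x, hPx, Matrix.mulVec_zero]
      simp [this]
    · rw [codisjoint_iff, eq_top_iff]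
      intro x _
      have : P *ᵥ x ∈ U ⊔ V := by rw [codisjoint_iff.1 hcompl.codisjoint]; trivial
      obtain ⟨u, hu, v, hv, huv⟩ := Submodule.mem_sup.1 this
      refine Submodule.mem_sup.2 ⟨P⁻¹ *ᵥ u, ?_, P⁻¹ *ᵥ v, ?_, ?_⟩
      · simp only [Submodule.mem_comap, hfapp, hPinv']; exact hu
      · simp only [Submodule.mem_comap, hfapp, hPinv']; exact hv
      · rw [← Matrix.mulVec_add, huv, hPinv]

end transfer

def Am (e : ℂ) : Matrix (Fin 3) (Fin 3) ℂ := !![e,0,1;0,e,1;0,0,-e]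
def Bm (b1 b2 b3 : ℂ) : Matrix (Fin 3) (Fin 3) ℂ := Matrix.diagonal ![b1,b2,b3]

lemma zneg0 : (-1 : ℂ) = ζ6 ^ 3 := zeta_cube.symm
lemma zneg1 : -ζ6 = ζ6 ^ 4 := by linear_combination -ζ6 * zeta_cube
lemma zneg2 : -ζ6 ^ 2 = ζ6 ^ 5 := by linear_combination -ζ6 ^ 2 * zeta_cube
lemma zneg3 : -ζ6 ^ 3 = 1 := by linear_combination -zeta_cube
lemma zneg4 : -ζ6 ^ 4 = ζ6 := by linear_combination -ζ6 * zeta_cube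
lemma zneg5 : -ζ6 ^ 5 = ζ6 ^ 2 := by linear_combination -ζ6 ^ 2 * zeta_cube

lemma match_id (e b1 b2 b3 : ℂ) (i : Fin 6) (h1 : b1 = ζ6 ^ (t8 i 0)) (h2 : b2 = ζ6 ^ (t8 i 1))
    (h3 : b3 = ζ6 ^ (t8 i 2)) (he : e = -σ8 i) :
    SimConj (Am e) (Bm b1 b2 b3) (A8 i) (B8 i) := by
  refine ⟨1, isUnit_one, ?_, ?_⟩
  · rw [one_mul, mul_one, Am, A8, he, neg_neg]
  · rw [one_mul, mul_one]
    ext r c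
    fin_cases r <;> fin_cases c <;>
      simp [Bm, B8, Matrix.diagonal_apply, ee_nat, h1, h2, h3]

def Sw : Matrix (Fin 3) (Fin 3) ℂ := !![0,1,0;1,0,0;0,0,1]

lemma sw_unit : IsUnit Sw := by
  rw [Matrix.isUnit_iff_isUnit_det, Sw, Matrix.det_fin_three]
  norm_num [Matrix.vecHead, Matrix.vecTail, Matrix.cons_val_two]

lemma match_swap (e b1 b2 b3 : ℂ) (i : Fin 6) (h1 : b1 = ζ6 ^ (t8 i 1)) (h2 : b2 = ζ6 ^ (t8 i 0))
    (h3 : b3 = ζ6 ^ (t8 i 2)) (he : e = -σ8 i) :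
    SimConj (Am e) (Bm b1 b2 b3) (A8 i) (B8 i) := by
  have hAe : A8 i = Am e := by
    ext r c
    fin_cases r <;> fin_cases c <;> simp [A8, Am, he]
  refine ⟨Sw, sw_unit, ?_, ?_⟩
  · rw [hAe]
    ext r c
    fin_cases r <;> fin_cases c <;>
      simp [Sw, Am, Matrix.mul_apply, Fin.sum_univ_three, Matrix.vecHead, Matrix.vecTail]
  · ext r c
    fin_cases r <;> fin_cases c <;>
      simp [Sw, Bm, B8, Matrix.mul_apply, Fin.sum_univ_three, Matrix.diagonal_apply,
        Matrix.vecHead, Matrix.vecTail, ee_nat, h1, h2, h3]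

lemma key_entries {e b1 b2 b3 : ℂ} (hA2 : (Am e) ^ 2 = 1)
    (hAB3 : (Am e * Bm b1 b2 b3) ^ 3 = 1) :
    e ^ 2 = 1 ∧ (e*b1)^3 = 1 ∧ (e*b2)^3 = 1 ∧ (-(e*b3))^3 = 1 ∧
      b3 * ((e*b1)^2 + (e*b1)*(-(e*b3)) + (-(e*b3))^2) = 0 ∧
      b3 * ((e*b2)^2 + (e*b2)*(-(e*b3)) + (-(e*b3))^2) = 0 := by
  have hM : Am e * Bm b1 b2 b3 = !![e*b1, 0, b3; 0, e*b2, b3; 0, 0, -(e*b3)] := by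
    ext r c
    fin_cases r <;> fin_cases c <;>
      simp [Am, Bm, Matrix.mul_apply, Fin.sum_univ_three, Matrix.diagonal_apply,
        Matrix.vecHead, Matrix.vecTail] <;> ring
  rw [hM] at hAB3
  rw [pow_succ, pow_two] at hAB3
  rw [pow_two] at hA2
  have ha00 := congrFun (congrFun hA2 0) 0
  have h00 := congrFun (congrFun hAB3 0) 0
  have h11 := congrFun (congrFun hAB3 1) 1
  have h22 := congrFun (congrFun hAB3 2) 2
  have h02 := congrFun (congrFun hAB3 0) 2
  have h12 := congrFun (congrFun hAB3 1) 2
  simp [Am, Matrix.mul_apply, Fin.sum_univ_three, Matrix.one_apply,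
    Matrix.vecHead, Matrix.vecTail] at ha00 h00 h11 h22 h02 h12
  exact ⟨by linear_combination ha00, by linear_combination h00, by linear_combination h11,
    by linear_combination h22, by linear_combination h02, by linear_combination h12⟩

lemma key (e b1 b2 b3 : ℂ) (hA2 : (Am e) ^ 2 = 1)
    (hAB3 : (Am e * Bm b1 b2 b3) ^ 3 = 1) (hb12 : b1 ≠ b2) :
    ∃ i : Fin 6, SimConj (Am e) (Bm b1 b2 b3) (A8 i) (B8 i) := by
  obtain ⟨he2, hl1, hl2, hm, h02, h12⟩ := key_entries hA2 hAB3
  have he0 : e ≠ 0 := by intro h; rw [h] at he2; simp at he2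
  have hb3 : b3 ≠ 0 := by intro h; rw [h] at hm; simp at hm
  have hrel1 : (e*b1)^2 + (e*b1)*(-(e*b3)) + (-(e*b3))^2 = 0 :=
    (mul_eq_zero.1 h02).resolve_left hb3
  have hrel2 : (e*b2)^2 + (e*b2)*(-(e*b3)) + (-(e*b3))^2 = 0 :=
    (mul_eq_zero.1 h12).resolve_left hb3
  have hne1m : e*b1 ≠ -(e*b3) := by
    intro h
    have h3 : (e*b1)^2 = 0 := by rw [← h] at hrel1; linear_combination hrel1 / 3
    exact one_ne_zero (by rw [← hl1]; linear_combination (e*b1) * h3 : (1:ℂ) = 0)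
  have hne2m : e*b2 ≠ -(e*b3) := by
    intro h
    have h3 : (e*b2)^2 = 0 := by rw [← h] at hrel2; linear_combination hrel2 / 3
    exact one_ne_zero (by rw [← hl2]; linear_combination (e*b2) * h3 : (1:ℂ) = 0)
  have hne12 : e*b1 ≠ e*b2 := fun h => hb12 (mul_left_cancel₀ he0 h)
  rcases square_roots he2 with he | he <;>
    rcases cube_roots hl1 with h1 | h1 | h1 <;>
    rcases cube_roots hl2 with h2 | h2 | h2 <;>
    rcases cube_roots hm with hm3 | hm3 | hm3
  · exact absurd (h1.trans h2.symm) hne12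
  · exact absurd (h1.trans h2.symm) hne12
  · exact absurd (h1.trans h2.symm) hne12
  · exact absurd (h1.trans hm3.symm) hne1m
  · exact absurd (h2.trans hm3.symm) hne2m
  · exact ⟨1, match_swap e b1 b2 b3 1 (by rw [show t8 1 1 = 0 from rfl]; linear_combination h1 - b1 * he)
      (by rw [show t8 1 0 = 2 from rfl]; linear_combination h2 - b2 * he)
      (by rw [show t8 1 2 = 1 from rfl]; linear_combination -hm3 - b3 * he - ζ6 * zeta_cube)
      (by rw [he, σ8, show t8 1 2 = 1 from rfl]; norm_num)⟩
  · exact absurd (h1.trans hm3.symm) hne1m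
  · exact ⟨5, match_id e b1 b2 b3 5 (by rw [show t8 5 0 = 0 from rfl]; linear_combination h1 - b1 * he)
      (by rw [show t8 5 1 = 4 from rfl]; linear_combination h2 - b2 * he)
      (by rw [show t8 5 2 = 5 from rfl]; linear_combination -hm3 - b3 * he - ζ6^2 * zeta_cube)
      (by rw [he, σ8, show t8 5 2 = 5 from rfl]; norm_num)⟩
  · exact absurd (h2.trans hm3.symm) hne2m
  · exact absurd (h2.trans hm3.symm) hne2m
  · exact absurd (h1.trans hm3.symm) hne1m
  · exact ⟨1, match_id e b1 b2 b3 1 (by rw [show t8 1 0 = 2 from rfl]; linear_combination h1 - b1 * he)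
      (by rw [show t8 1 1 = 0 from rfl]; linear_combination h2 - b2 * he)
      (by rw [show t8 1 2 = 1 from rfl]; linear_combination -hm3 - b3 * he - ζ6 * zeta_cube)
      (by rw [he, σ8, show t8 1 2 = 1 from rfl]; norm_num)⟩
  · exact absurd (h1.trans h2.symm) hne12
  · exact absurd (h1.trans h2.symm) hne12
  · exact absurd (h1.trans h2.symm) hne12
  · exact ⟨3, match_swap e b1 b2 b3 3 (by rw [show t8 3 1 = 2 from rfl]; linear_combination h1 - b1 * he)
      (by rw [show t8 3 0 = 4 from rfl]; linear_combination h2 - b2 * he)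
      (by rw [show t8 3 2 = 3 from rfl]; linear_combination -hm3 - b3 * he - 1 * zeta_cube)
      (by rw [he, σ8, show t8 3 2 = 3 from rfl]; norm_num)⟩
  · exact absurd (h1.trans hm3.symm) hne1m
  · exact absurd (h2.trans hm3.symm) hne2m
  · exact absurd (h2.trans hm3.symm) hne2m
  · exact ⟨5, match_swap e b1 b2 b3 5 (by rw [show t8 5 1 = 4 from rfl]; linear_combination h1 - b1 * he)
      (by rw [show t8 5 0 = 0 from rfl]; linear_combination h2 - b2 * he)
      (by rw [show t8 5 2 = 5 from rfl]; linear_combination -hm3 - b3 * he - ζ6^2 * zeta_cube)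
      (by rw [he, σ8, show t8 5 2 = 5 from rfl]; norm_num)⟩
  · exact absurd (h1.trans hm3.symm) hne1m
  · exact ⟨3, match_id e b1 b2 b3 3 (by rw [show t8 3 0 = 4 from rfl]; linear_combination h1 - b1 * he)
      (by rw [show t8 3 1 = 2 from rfl]; linear_combination h2 - b2 * he)
      (by rw [show t8 3 2 = 3 from rfl]; linear_combination -hm3 - b3 * he - 1 * zeta_cube)
      (by rw [he, σ8, show t8 3 2 = 3 from rfl]; norm_num)⟩
  · exact absurd (h2.trans hm3.symm) hne2m
  · exact absurd (h1.trans hm3.symm) hne1m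
  · exact absurd (h1.trans h2.symm) hne12
  · exact absurd (h1.trans h2.symm) hne12
  · exact absurd (h1.trans h2.symm) hne12
  · exact absurd (h1.trans h2.symm) hne12
  · exact absurd (h1.trans h2.symm) hne12
  · exact absurd (h1.trans h2.symm) hne12
  · exact absurd (h1.trans hm3.symm) hne1m
  · exact absurd (h2.trans hm3.symm) hne2m
  · exact ⟨4, match_swap e b1 b2 b3 4 (by rw [show t8 4 1 = 3 from rfl]; linear_combination -h1 + b1 * he - 1 * zeta_cube)
      (by rw [show t8 4 0 = 5 from rfl]; linear_combination -h2 + b2 * he - ζ6^2 * zeta_cube)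
      (by rw [show t8 4 2 = 4 from rfl]; linear_combination hm3 + b3 * he)
      (by rw [he, σ8, show t8 4 2 = 4 from rfl]; norm_num)⟩
  · exact absurd (h1.trans hm3.symm) hne1m
  · exact ⟨2, match_id e b1 b2 b3 2 (by rw [show t8 2 0 = 3 from rfl]; linear_combination -h1 + b1 * he - 1 * zeta_cube)
      (by rw [show t8 2 1 = 1 from rfl]; linear_combination -h2 + b2 * he - ζ6 * zeta_cube)
      (by rw [show t8 2 2 = 2 from rfl]; linear_combination hm3 + b3 * he)
      (by rw [he, σ8, show t8 2 2 = 2 from rfl]; norm_num)⟩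
  · exact absurd (h2.trans hm3.symm) hne2m
  · exact absurd (h2.trans hm3.symm) hne2m
  · exact absurd (h1.trans hm3.symm) hne1m
  · exact ⟨4, match_id e b1 b2 b3 4 (by rw [show t8 4 0 = 5 from rfl]; linear_combination -h1 + b1 * he - ζ6^2 * zeta_cube)
      (by rw [show t8 4 1 = 3 from rfl]; linear_combination -h2 + b2 * he - 1 * zeta_cube)
      (by rw [show t8 4 2 = 4 from rfl]; linear_combination hm3 + b3 * he)
      (by rw [he, σ8, show t8 4 2 = 4 from rfl]; norm_num)⟩
  · exact absurd (h1.trans h2.symm) hne12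
  · exact absurd (h1.trans h2.symm) hne12
  · exact absurd (h1.trans h2.symm) hne12
  · exact ⟨0, match_swap e b1 b2 b3 0 (by rw [show t8 0 1 = 5 from rfl]; linear_combination -h1 + b1 * he - ζ6^2 * zeta_cube)
      (by rw [show t8 0 0 = 1 from rfl]; linear_combination -h2 + b2 * he - ζ6 * zeta_cube)
      (by rw [show t8 0 2 = 0 from rfl]; linear_combination hm3 + b3 * he)
      (by rw [he, σ8, show t8 0 2 = 0 from rfl]; norm_num)⟩
  · exact absurd (h1.trans hm3.symm) hne1m
  · exact absurd (h2.trans hm3.symm) hne2m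
  · exact absurd (h2.trans hm3.symm) hne2m
  · exact ⟨2, match_swap e b1 b2 b3 2 (by rw [show t8 2 1 = 1 from rfl]; linear_combination -h1 + b1 * he - ζ6 * zeta_cube)
      (by rw [show t8 2 0 = 3 from rfl]; linear_combination -h2 + b2 * he - 1 * zeta_cube)
      (by rw [show t8 2 2 = 2 from rfl]; linear_combination hm3 + b3 * he)
      (by rw [he, σ8, show t8 2 2 = 2 from rfl]; norm_num)⟩
  · exact absurd (h1.trans hm3.symm) hne1m
  · exact ⟨0, match_id e b1 b2 b3 0 (by rw [show t8 0 0 = 1 from rfl]; linear_combination -h1 + b1 * he - ζ6 * zeta_cube)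
      (by rw [show t8 0 1 = 5 from rfl]; linear_combination -h2 + b2 * he - ζ6^2 * zeta_cube)
      (by rw [show t8 0 2 = 0 from rfl]; linear_combination hm3 + b3 * he)
      (by rw [he, σ8, show t8 0 2 = 0 from rfl]; norm_num)⟩
  · exact absurd (h2.trans hm3.symm) hne2m
  · exact absurd (h1.trans hm3.symm) hne1m
  · exact absurd (h1.trans h2.symm) hne12
  · exact absurd (h1.trans h2.symm) hne12
  · exact absurd (h1.trans h2.symm) hne12

lemma invariant_span {n : ℕ} (M : Matrix (Fin n) (Fin n) ℂ) (s : Set (Fin n → ℂ))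
    (h : ∀ x ∈ s, M *ᵥ x ∈ Submodule.span ℂ s) : Invariant M (Submodule.span ℂ s) := by
  intro v hv
  induction hv using Submodule.span_induction with
  | mem x hx => exact h x hx
  | zero => rw [Matrix.mulVec_zero]; exact Submodule.zero_mem _
  | add x y _ _ hx hy => rw [Matrix.mulVec_add]; exact Submodule.add_mem _ hx hy
  | smul c x _ hx => rw [Matrix.mulVec_smul]; exact Submodule.smul_mem _ _ hx

lemma vec3_ne_zero_of (v : Fin 3 → ℂ) (i : Fin 3) (h : v i ≠ 0) : v ≠ 0 :=
  fun hc => h (by rw [hc]; rfl)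

lemma decomp_helper (M N : Matrix (Fin 3) (Fin 3) ℂ) (u v w : Fin 3 → ℂ)
    (hMu : M *ᵥ u ∈ Submodule.span ℂ {u}) (hNu : N *ᵥ u ∈ Submodule.span ℂ {u})
    (hMv : M *ᵥ v ∈ Submodule.span ℂ {v, w}) (hMw : M *ᵥ w ∈ Submodule.span ℂ {v, w})
    (hNv : N *ᵥ v ∈ Submodule.span ℂ {v, w}) (hNw : N *ᵥ w ∈ Submodule.span ℂ {v, w})
    (hu : u ≠ 0) (hv : v ≠ 0)
    (hdisj : ∀ c a b : ℂ, c • u = a • v + b • w → c = 0)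
    (hsup : ∀ x : Fin 3 → ℂ, ∃ c a b : ℂ, x = c • u + (a • v + b • w)) :
    Decomposable M N := by
  refine ⟨Submodule.span ℂ {u}, Submodule.span ℂ {v, w}, ?_, ?_, ⟨?_, ?_⟩,
    invariant_span M {u} ?_, invariant_span N {u} ?_,
    invariant_span M {v, w} ?_, invariant_span N {v, w} ?_⟩
  · intro hc
    exact hu (by simpa using (Submodule.span_singleton_eq_bot (x := u)).1 hc)
  · intro hc
    have : v ∈ (⊥ : Submodule ℂ (Fin 3 → ℂ)) := by
      rw [← hc]; exact Submodule.subset_span (Set.mem_insert _ _)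
    exact hv (by simpa using this)
  · rw [disjoint_iff, eq_bot_iff]
    intro x hx
    obtain ⟨hx1, hx2⟩ := Submodule.mem_inf.1 hx
    obtain ⟨c, hc⟩ := Submodule.mem_span_singleton.1 hx1
    obtain ⟨a, b, hab⟩ := Submodule.mem_span_pair.1 hx2
    have hc0 : c = 0 := hdisj c a b (hc.trans hab.symm)
    have : x = 0 := by rw [← hc, hc0, zero_smul]
    simp [this]
  · rw [codisjoint_iff, eq_top_iff]
    intro x _
    obtain ⟨c, a, b, hx⟩ := hsup x
    refine Submodule.mem_sup.2 ⟨c • u, ?_, a • v + b • w, ?_, hx.symm⟩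
    · exact Submodule.smul_mem _ _ (Submodule.subset_span rfl)
    · exact Submodule.add_mem _
        (Submodule.smul_mem _ _ (Submodule.subset_span (Set.mem_insert _ _)))
        (Submodule.smul_mem _ _ (Submodule.subset_span (Set.mem_insert_of_mem _ rfl)))
  · rintro x rfl; exact hMu
  · rintro x rfl; exact hNu
  · rintro x (rfl | rfl); exacts [hMv, hMw]
  · rintro x (rfl | rfl); exacts [hNv, hNw]

lemma mem_span_single {u : Fin 3 → ℂ} {c : ℂ} {x : Fin 3 → ℂ} (h : x = c • u) :
    x ∈ Submodule.span ℂ {u} := Submodule.mem_span_singleton.2 ⟨c, h.symm⟩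

lemma mem_span_pair' {v w : Fin 3 → ℂ} {a b : ℂ} {x : Fin 3 → ℂ} (h : x = a • v + b • w) :
    x ∈ Submodule.span ℂ {v, w} := Submodule.mem_span_pair.2 ⟨a, b, h.symm⟩

lemma decomp_1 (e1 e2 y c b1 b2 b3 : ℂ) :
    Decomposable !![e1,0,0;0,e2,y;0,0,c] (Bm b1 b2 b3) := by
  refine decomp_helper _ _ ![1,0,0] ![0,1,0] ![0,0,1]
    (mem_span_single (c := e1) ?_) (mem_span_single (c := b1) ?_)
    (mem_span_pair' (a := e2) (b := 0) ?_) (mem_span_pair' (a := y) (b := c) ?_)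
    (mem_span_pair' (a := b2) (b := 0) ?_) (mem_span_pair' (a := 0) (b := b3) ?_)
    (vec3_ne_zero_of _ 0 one_ne_zero) (vec3_ne_zero_of _ 1 one_ne_zero) ?_ ?_
  · funext i; fin_cases i <;> simp [Matrix.mulVec, dotProduct, Fin.sum_univ_three]
  · funext i; fin_cases i <;>
      simp [Bm, Matrix.mulVec, dotProduct, Fin.sum_univ_three, Matrix.diagonal_apply]
  · funext i; fin_cases i <;> simp [Matrix.mulVec, dotProduct, Fin.sum_univ_three]
  · funext i; fin_cases i <;> simp [Matrix.mulVec, dotProduct, Fin.sum_univ_three]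
  · funext i; fin_cases i <;>
      simp [Bm, Matrix.mulVec, dotProduct, Fin.sum_univ_three, Matrix.diagonal_apply]
  · funext i; fin_cases i <;>
      simp [Bm, Matrix.mulVec, dotProduct, Fin.sum_univ_three, Matrix.diagonal_apply]
  · intro c' a b h
    have := congrFun h 0
    simpa using this
  · intro x
    refine ⟨x 0, x 1, x 2, ?_⟩
    funext i; fin_cases i <;> simp

lemma decomp_2 (e1 e2 y c b1 b2 b3 : ℂ) :
    Decomposable !![e1,0,y;0,e2,0;0,0,c] (Bm b1 b2 b3) := by
  refine decomp_helper _ _ ![0,1,0] ![1,0,0] ![0,0,1]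
    (mem_span_single (c := e2) ?_) (mem_span_single (c := b2) ?_)
    (mem_span_pair' (a := e1) (b := 0) ?_) (mem_span_pair' (a := y) (b := c) ?_)
    (mem_span_pair' (a := b1) (b := 0) ?_) (mem_span_pair' (a := 0) (b := b3) ?_)
    (vec3_ne_zero_of _ 1 one_ne_zero) (vec3_ne_zero_of _ 0 one_ne_zero) ?_ ?_
  · funext i; fin_cases i <;> simp [Matrix.mulVec, dotProduct, Fin.sum_univ_three]
  · funext i; fin_cases i <;>
      simp [Bm, Matrix.mulVec, dotProduct, Fin.sum_univ_three, Matrix.diagonal_apply]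
  · funext i; fin_cases i <;> simp [Matrix.mulVec, dotProduct, Fin.sum_univ_three]
  · funext i; fin_cases i <;> simp [Matrix.mulVec, dotProduct, Fin.sum_univ_three]
  · funext i; fin_cases i <;>
      simp [Bm, Matrix.mulVec, dotProduct, Fin.sum_univ_three, Matrix.diagonal_apply]
  · funext i; fin_cases i <;>
      simp [Bm, Matrix.mulVec, dotProduct, Fin.sum_univ_three, Matrix.diagonal_apply]
  · intro c' a b h
    simpa using congrFun h 1
  · intro x
    refine ⟨x 1, x 0, x 2, ?_⟩
    funext i; fin_cases i <;> simp

lemma decomp_3 (e b b3 : ℂ) : Decomposable (Am e) (Bm b b b3) := by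
  refine decomp_helper _ _ ![1,-1,0] ![1,1,0] ![0,0,1]
    (mem_span_single (c := e) ?_) (mem_span_single (c := b) ?_)
    (mem_span_pair' (a := e) (b := 0) ?_) (mem_span_pair' (a := 1) (b := -e) ?_)
    (mem_span_pair' (a := b) (b := 0) ?_) (mem_span_pair' (a := 0) (b := b3) ?_)
    (vec3_ne_zero_of _ 0 one_ne_zero) (vec3_ne_zero_of _ 0 one_ne_zero) ?_ ?_
  · funext i; fin_cases i <;>
      simp [Am, Matrix.mulVec, dotProduct, Fin.sum_univ_three] <;> ring
  · funext i; fin_cases i <;>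
      simp [Bm, Matrix.mulVec, dotProduct, Fin.sum_univ_three, Matrix.diagonal_apply]
  · funext i; fin_cases i <;>
      simp [Am, Matrix.mulVec, dotProduct, Fin.sum_univ_three]
  · funext i; fin_cases i <;>
      simp [Am, Matrix.mulVec, dotProduct, Fin.sum_univ_three] <;> ring
  · funext i; fin_cases i <;>
      simp [Bm, Matrix.mulVec, dotProduct, Fin.sum_univ_three, Matrix.diagonal_apply]
  · funext i; fin_cases i <;>
      simp [Bm, Matrix.mulVec, dotProduct, Fin.sum_univ_three, Matrix.diagonal_apply]
  · intro c a d h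
    have h0 := congrFun h 0
    have h1 := congrFun h 1
    simp at h0 h1
    linear_combination (h0 - h1) / 2
  · intro x
    refine ⟨(x 0 - x 1)/2, (x 0 + x 1)/2, x 2, ?_⟩
    funext i; fin_cases i <;> simp <;> ring

lemma conj_flip {Q M M' : Matrix (Fin 3) (Fin 3) ℂ} (hQ : IsUnit Q) (h : M * Q = Q * M') :
    Q⁻¹ * M = M' * Q⁻¹ := by
  calc Q⁻¹ * M = Q⁻¹ * (M * Q) * Q⁻¹ := by
        rw [mul_assoc Q⁻¹ (M * Q) Q⁻¹, mul_assoc M Q Q⁻¹, mul_inv_of_isUnit hQ, mul_one]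
  _ = Q⁻¹ * (Q * M') * Q⁻¹ := by rw [h]
  _ = M' * Q⁻¹ := by rw [← mul_assoc Q⁻¹ Q M', inv_mul_of_isUnit hQ, one_mul]

lemma trace_B8 (i : Fin 6) : (B8 i).trace = 2 * ζ6 ^ (i : ℕ) := by
  have h0 : ∀ k : Fin 6, (B8 k).trace = ζ6 ^ (t8 k 0) + ζ6 ^ (t8 k 1) + ζ6 ^ (t8 k 2) := by
    intro k
    rw [B8, Matrix.trace_diagonal]
    rw [Fin.sum_univ_three, ee_nat, ee_nat, ee_nat]
  fin_cases i
  · rw [h0]; show ζ6 ^ (1:ℕ) + ζ6 ^ (5:ℕ) + ζ6 ^ (0:ℕ) = 2 * ζ6 ^ (0:ℕ)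
    linear_combination (-1 + ζ6^2 + ζ6^3) * zeta_quad
  · rw [h0]; show ζ6 ^ (2:ℕ) + ζ6 ^ (0:ℕ) + ζ6 ^ (1:ℕ) = 2 * ζ6 ^ (1:ℕ)
    linear_combination zeta_quad
  · rw [h0]; show ζ6 ^ (3:ℕ) + ζ6 ^ (1:ℕ) + ζ6 ^ (2:ℕ) = 2 * ζ6 ^ (2:ℕ)
    linear_combination ζ6 * zeta_quad
  · rw [h0]; show ζ6 ^ (4:ℕ) + ζ6 ^ (2:ℕ) + ζ6 ^ (3:ℕ) = 2 * ζ6 ^ (3:ℕ)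
    linear_combination ζ6^2 * zeta_quad
  · rw [h0]; show ζ6 ^ (5:ℕ) + ζ6 ^ (3:ℕ) + ζ6 ^ (4:ℕ) = 2 * ζ6 ^ (4:ℕ)
    linear_combination ζ6^3 * zeta_quad
  · rw [h0]; show ζ6 ^ (0:ℕ) + ζ6 ^ (4:ℕ) + ζ6 ^ (5:ℕ) = 2 * ζ6 ^ (5:ℕ)
    linear_combination (1 + ζ6 - ζ6^3) * zeta_quad

lemma uniq_aux {A B : Matrix (Fin 3) (Fin 3) ℂ} {i j : Fin 6}
    (hi : SimConj A B (A8 i) (B8 i)) (hj : SimConj A B (A8 j) (B8 j)) : i = j := by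
  obtain ⟨P, hP, _, hPB⟩ := hi
  obtain ⟨R, hR, _, hRB⟩ := hj
  have ti : (B8 i).trace = B.trace := by
    have hB : B8 i = P * B * P⁻¹ := by
      calc B8 i = B8 i * P * P⁻¹ := by rw [mul_assoc, mul_inv_of_isUnit hP, mul_one]
      _ = P * B * P⁻¹ := by rw [← hPB]
    rw [hB, Matrix.trace_mul_cycle, inv_mul_of_isUnit hP, one_mul]
  have tj : (B8 j).trace = B.trace := by
    have hB : B8 j = R * B * R⁻¹ := by
      calc B8 j = B8 j * R * R⁻¹ := by rw [mul_assoc, mul_inv_of_isUnit hR, mul_one]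
      _ = R * B * R⁻¹ := by rw [← hRB]
    rw [hB, Matrix.trace_mul_cycle, inv_mul_of_isUnit hR, one_mul]
  have h2 : (2:ℂ) * ζ6 ^ (i:ℕ) = 2 * ζ6 ^ (j:ℕ) := by
    rw [← trace_B8, ← trace_B8, ti, tj]
  have hz : ζ6 ^ (i:ℕ) = ζ6 ^ (j:ℕ) := mul_left_cancel₀ two_ne_zero h2
  obtain ⟨k, hk⟩ := (zeta_pow_eq_iff _ _).1 hz
  have hi6 : (i:ℕ) < 6 := i.isLt
  have hj6 : (j:ℕ) < 6 := j.isLt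
  exact Fin.ext (by omega)

/-- an indecomposable pair `(A, B)` with `A² = I`, `(AB)³ = I`,
`B` diagonalizable, possessing a two-dimensional invariant subspace which is the
direct sum of two invariant lines, is simultaneously conjugate to exactly one of
the six pairs `(A_x, B_x)` of Table 1. -/
theorem stmt_8 (A B : Matrix (Fin 3) (Fin 3) ℂ)
    (hA2 : A ^ 2 = 1) (hAB3 : (A * B) ^ 3 = 1)
    (hdiag : IsDiagonalizable B) (hindec : Indecomposable A B)
    (hW : ∃ W L1 L2 : Submodule ℂ (Fin 3 → ℂ),
      Module.finrank ℂ W = 2 ∧ Invariant A W ∧ Invariant B W ∧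
      Module.finrank ℂ L1 = 1 ∧ Invariant A L1 ∧ Invariant B L1 ∧
      Module.finrank ℂ L2 = 1 ∧ Invariant A L2 ∧ Invariant B L2 ∧
      L1 ⊓ L2 = ⊥ ∧ L1 ⊔ L2 = W) :
    ∃! i : Fin 6, SimConj A B (A8 i) (B8 i) := by
  obtain ⟨W, L1, L2, hWr, hAW, hBW, hL1r, hAL1, hBL1, hL2r, hAL2, hBL2, hL12, hL12W⟩ := hW
  -- invariant lines: eigenvectors v1, v2
  have hL1ne : L1 ≠ ⊥ := by intro h; rw [h] at hL1r; simp at hL1r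
  have hL2ne : L2 ≠ ⊥ := by intro h; rw [h] at hL2r; simp at hL2r
  obtain ⟨v1, hv1L1, hv1ne⟩ := Submodule.exists_mem_ne_zero_of_ne_bot hL1ne
  obtain ⟨v2, hv2L2, hv2ne⟩ := Submodule.exists_mem_ne_zero_of_ne_bot hL2ne
  have hL1span : L1 = Submodule.span ℂ {v1} := by
    refine (Submodule.eq_of_le_of_finrank_eq ?_ ?_).symm
    · exact Submodule.span_le.2 (Set.singleton_subset_iff.2 hv1L1)
    · rw [finrank_span_singleton hv1ne, hL1r]
  have hL2span : L2 = Submodule.span ℂ {v2} := by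
    refine (Submodule.eq_of_le_of_finrank_eq ?_ ?_).symm
    · exact Submodule.span_le.2 (Set.singleton_subset_iff.2 hv2L2)
    · rw [finrank_span_singleton hv2ne, hL2r]
  have eig : ∀ (M : Matrix (Fin 3) (Fin 3) ℂ) (v : Fin 3 → ℂ) (L : Submodule ℂ (Fin 3 → ℂ)),
      Invariant M L → v ∈ L → L = Submodule.span ℂ {v} → ∃ c : ℂ, M *ᵥ v = c • v := by
    intro M v L hML hvL hLspan
    have := hML v hvL
    rw [hLspan, Submodule.mem_span_singleton] at this
    obtain ⟨c, hc⟩ := this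
    exact ⟨c, hc.symm⟩
  obtain ⟨ε1, hAv1⟩ := eig A v1 L1 hAL1 hv1L1 hL1span
  obtain ⟨β1, hBv1⟩ := eig B v1 L1 hBL1 hv1L1 hL1span
  obtain ⟨ε2, hAv2⟩ := eig A v2 L2 hAL2 hv2L2 hL2span
  obtain ⟨β2, hBv2⟩ := eig B v2 L2 hBL2 hv2L2 hL2span
  have hv1W : v1 ∈ W := (le_sup_left.trans hL12W.le) hv1L1
  have hv2W : v2 ∈ W := (le_sup_right.trans hL12W.le) hv2L2
  -- third eigenvector of B outside W
  obtain ⟨Pd, hPd, d, hPdB⟩ := hdiag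
  have hBPd : B * Pd⁻¹ = Pd⁻¹ * Matrix.diagonal d := by
    calc B * Pd⁻¹ = Pd⁻¹ * (Pd * B) * Pd⁻¹ := by
          rw [← mul_assoc Pd⁻¹ Pd B, inv_mul_of_isUnit hPd, one_mul]
    _ = Pd⁻¹ * (Matrix.diagonal d * Pd) * Pd⁻¹ := by rw [hPdB]
    _ = Pd⁻¹ * Matrix.diagonal d := by
          rw [mul_assoc Pd⁻¹ (Matrix.diagonal d * Pd) Pd⁻¹,
            mul_assoc (Matrix.diagonal d) Pd Pd⁻¹, mul_inv_of_isUnit hPd, mul_one]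
  have hBcols : ∀ j, B *ᵥ (Pd⁻¹ *ᵥ Pi.single j 1) = d j • (Pd⁻¹ *ᵥ Pi.single j 1) := by
    intro j
    have hsing : (Pi.single j (d j * 1) : Fin 3 → ℂ) = d j • (Pi.single j 1 : Fin 3 → ℂ) := by
      funext m
      by_cases hm : m = j <;> simp [Pi.single_apply, hm]
    rw [Matrix.mulVec_mulVec, hBPd, ← Matrix.mulVec_mulVec, Matrix.diagonal_mulVec_single,
      hsing, Matrix.mulVec_smul]
  have hv3ex : ∃ j, (Pd⁻¹ *ᵥ Pi.single j 1) ∉ W := by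
    by_contra hc
    push_neg at hc
    have hWtop : ∀ x : Fin 3 → ℂ, x ∈ W := by
      intro x
      have hx : x = ∑ j : Fin 3, (Pd *ᵥ x) j • (Pd⁻¹ *ᵥ Pi.single j 1) := by
        have h1 : x = Pd⁻¹ *ᵥ (Pd *ᵥ x) := by
          rw [Matrix.mulVec_mulVec, inv_mul_of_isUnit hPd, Matrix.one_mulVec]
        funext k
        calc x k = (Pd⁻¹ *ᵥ (Pd *ᵥ x)) k := by rw [← h1]
        _ = _ := by
              simp [Matrix.mulVec, dotProduct, Fin.sum_univ_three, Finset.sum_apply,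
                Pi.single_apply]
              ring
      rw [hx]
      exact Submodule.sum_mem _ (fun j _ => Submodule.smul_mem _ _ (hc j))
    have hWtop' : W = ⊤ := eq_top_iff.2 (fun x _ => hWtop x)
    rw [hWtop', finrank_top, Module.finrank_fin_fun] at hWr
    norm_num at hWr
  obtain ⟨j3, hv3W⟩ := hv3ex
  have hBv3 : B *ᵥ (Pd⁻¹ *ᵥ Pi.single j3 1) = d j3 • (Pd⁻¹ *ᵥ Pi.single j3 1) := hBcols j3
  set v3 : Fin 3 → ℂ := Pd⁻¹ *ᵥ Pi.single j3 1 with hv3def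
  set β3 : ℂ := d j3 with hb3def
  -- the change-of-basis matrix
  set Q : Matrix (Fin 3) (Fin 3) ℂ := Matrix.of fun r c => ![v1, v2, v3] c r with hQdef
  have hQcol : ∀ x : Fin 3 → ℂ, Q *ᵥ x = x 0 • v1 + x 1 • v2 + x 2 • v3 := by
    intro x; funext k
    simp [hQdef, Matrix.mulVec, dotProduct, Fin.sum_univ_three]
    ring
  have hker : ∀ x : Fin 3 → ℂ, Q *ᵥ x = 0 → x = 0 := by
    intro x hx
    rw [hQcol] at hx
    by_cases hx2 : x 2 = 0
    · rw [hx2, zero_smul, add_zero] at hx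
      have h1 : x 1 • v2 = -(x 0 • v1) := eq_neg_of_add_eq_zero_right hx
      have hmem : x 0 • v1 ∈ L1 ⊓ L2 := Submodule.mem_inf.2
        ⟨Submodule.smul_mem _ _ hv1L1, by
          have : x 0 • v1 = -(x 1 • v2) := by rw [h1, neg_neg]
          rw [this]
          exact Submodule.neg_mem _ (Submodule.smul_mem _ _ hv2L2)⟩
      rw [hL12] at hmem
      have hx0 : x 0 = 0 := by
        rcases smul_eq_zero.1 (Submodule.mem_bot ℂ |>.1 hmem) with h | h
        · exact h
        · exact absurd h hv1ne
      have hx1 : x 1 = 0 := by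
        rw [hx0, zero_smul, zero_add] at hx
        rcases smul_eq_zero.1 hx with h | h
        · exact h
        · exact absurd h hv2ne
      funext m
      fin_cases m
      · exact hx0
      · exact hx1
      · exact hx2
    · exfalso
      apply hv3W
      have h2 : x 2 • v3 = -(x 0 • v1 + x 1 • v2) := eq_neg_of_add_eq_zero_right hx
      have h1 : v3 = (-(x 2)⁻¹) • (x 0 • v1 + x 1 • v2) := by
        calc v3 = (x 2)⁻¹ • (x 2 • v3) := by rw [smul_smul, inv_mul_cancel₀ hx2, one_smul]
        _ = _ := by rw [h2, smul_neg, ← neg_smul]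
      rw [h1]
      exact Submodule.smul_mem _ _ (Submodule.add_mem _ (Submodule.smul_mem _ _ hv1W)
        (Submodule.smul_mem _ _ hv2W))
  have hQunit : IsUnit Q := by
    rw [← Matrix.mulVec_injective_iff_isUnit]
    intro x y hxy
    have := hker (x - y) (by rw [Matrix.mulVec_sub, hxy, sub_self])
    exact sub_eq_zero.1 this
  have hQinvunit : IsUnit Q⁻¹ := Matrix.isUnit_nonsing_inv_iff.2 hQunit
  have hQsurj : ∀ y : Fin 3 → ℂ, ∃ x, Q *ᵥ x = y := fun y =>
    ⟨Q⁻¹ *ᵥ y, by rw [Matrix.mulVec_mulVec, mul_inv_of_isUnit hQunit, Matrix.one_mulVec]⟩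
  obtain ⟨aa, bb, cc, hAv3⟩ : ∃ aa bb cc : ℂ, A *ᵥ v3 = aa • v1 + bb • v2 + cc • v3 := by
    obtain ⟨w, hw⟩ := hQsurj (A *ᵥ v3)
    exact ⟨w 0, w 1, w 2, by rw [← hw, hQcol]⟩
  set A1 : Matrix (Fin 3) (Fin 3) ℂ := !![ε1,0,aa; 0,ε2,bb; 0,0,cc] with hA1def
  set B1 : Matrix (Fin 3) (Fin 3) ℂ := Bm β1 β2 β3 with hB1def
  have hAQ : A * Q = Q * A1 := by
    ext r k
    fin_cases k
    · have h := congrFun hAv1 r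
      simp [hQdef, hA1def, Matrix.mul_apply, Fin.sum_univ_three, Matrix.mulVec,
        dotProduct, Matrix.vecHead, Matrix.vecTail] at h ⊢
      linear_combination h
    · have h := congrFun hAv2 r
      simp [hQdef, hA1def, Matrix.mul_apply, Fin.sum_univ_three, Matrix.mulVec,
        dotProduct, Matrix.vecHead, Matrix.vecTail] at h ⊢
      linear_combination h
    · have h := congrFun hAv3 r
      simp [hQdef, hA1def, Matrix.mul_apply, Fin.sum_univ_three, Matrix.mulVec,
        dotProduct, Matrix.vecHead, Matrix.vecTail] at h ⊢
      linear_combination h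
  have hBQ : B * Q = Q * B1 := by
    ext r k
    fin_cases k
    · have h := congrFun hBv1 r
      simp [hQdef, hB1def, Bm, Matrix.diagonal_apply, Matrix.mul_apply, Fin.sum_univ_three,
        Matrix.mulVec, dotProduct] at h ⊢
      linear_combination h
    · have h := congrFun hBv2 r
      simp [hQdef, hB1def, Bm, Matrix.diagonal_apply, Matrix.mul_apply, Fin.sum_univ_three,
        Matrix.mulVec, dotProduct] at h ⊢
      linear_combination h
    · have h := congrFun hBv3 r
      simp [hQdef, hB1def, Bm, Matrix.diagonal_apply, Matrix.mul_apply, Fin.sum_univ_three,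
        Matrix.mulVec, dotProduct] at h ⊢
      linear_combination h
  have hSim1 : SimConj A B A1 B1 :=
    ⟨Q⁻¹, hQinvunit, conj_flip hQunit hAQ, conj_flip hQunit hBQ⟩
  -- indecomposability: aa ≠ 0, bb ≠ 0
  by_cases ha : aa = 0
  · exfalso
    apply hindec
    refine decomposable_of_simConj hSim1 ?_
    rw [hA1def, hB1def, ha]
    exact decomp_1 ε1 ε2 bb cc β1 β2 β3
  by_cases hbb : bb = 0
  · exfalso
    apply hindec
    refine decomposable_of_simConj hSim1 ?_
    rw [hA1def, hB1def, hbb]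
    exact decomp_2 ε1 ε2 aa cc β1 β2 β3
  -- structure of A1 from A1² = 1
  have hA12 : A1 * A1 = 1 := by
    have := conj_pow_rel hQinvunit (conj_flip hQunit hAQ) 2 hA2
    rwa [pow_two] at this
  have e02 := congrFun (congrFun hA12 0) 2
  have e12 := congrFun (congrFun hA12 1) 2
  simp [hA1def, Matrix.mul_apply, Fin.sum_univ_three, Matrix.one_apply] at e02 e12
  have hcc : cc = -ε1 := by
    have h : aa * (ε1 + cc) = 0 := by linear_combination e02
    have := (mul_eq_zero.1 h).resolve_left ha
    linear_combination this
  have he21 : ε2 = ε1 := by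
    have h : bb * (ε2 + cc) = 0 := by linear_combination e12
    have := (mul_eq_zero.1 h).resolve_left hbb
    linear_combination this - hcc
  subst hcc he21
  -- rescale to make aa = bb = 1
  set P2 : Matrix (Fin 3) (Fin 3) ℂ := Matrix.diagonal ![aa⁻¹, bb⁻¹, 1] with hP2def
  have hP2unit : IsUnit P2 := by
    rw [Matrix.isUnit_iff_isUnit_det, hP2def, Matrix.det_diagonal, isUnit_iff_ne_zero]
    simp [Fin.prod_univ_three, ha, hbb]
  have hP2A : P2 * A1 = Am ε2 * P2 := by
    ext r k
    fin_cases r <;> fin_cases k <;>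
      simp [hP2def, hA1def, Am, Matrix.mul_apply, Fin.sum_univ_three, Matrix.diagonal_apply,
        Matrix.vecHead, Matrix.vecTail] <;>
      field_simp
  have hP2B : P2 * B1 = B1 * P2 := by
    ext r k
    fin_cases r <;> fin_cases k <;>
      simp [hP2def, hB1def, Bm, Matrix.mul_apply, Fin.sum_univ_three, Matrix.diagonal_apply,
        Matrix.vecHead, Matrix.vecTail] <;>
      ring
  have hSim2 : SimConj A B (Am ε2) B1 := simConj_trans hSim1 ⟨P2, hP2unit, hP2A, hP2B⟩
  -- indecomposability: β1 ≠ β2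
  by_cases hb12 : β1 = β2
  · exfalso
    apply hindec
    refine decomposable_of_simConj hSim2 ?_
    rw [hB1def, hb12]
    exact decomp_3 ε2 β2 β3
  -- conclude via the key classification lemma
  obtain ⟨P3, hP3, hP3A, hP3B⟩ := hSim2
  have hAm2 : (Am ε2) ^ 2 = 1 := conj_pow_rel hP3 hP3A 2 hA2
  have hAmB3 : (Am ε2 * B1) ^ 3 = 1 := conj_pow_rel hP3 (conj_mul_rel hP3A hP3B) 3 hAB3
  obtain ⟨i, hKey⟩ := key ε2 β1 β2 β3 hAm2 (by rw [← hB1def]; exact hAmB3) hb12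
  have hFinal : SimConj A B (A8 i) (B8 i) :=
    simConj_trans ⟨P3, hP3, hP3A, hP3B⟩ (by rw [hB1def]; exact hKey)
  exact ⟨i, hFinal, fun y hy => uniq_aux hy hFinal⟩
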